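/- Let $\hat{x} \in \mathbb{R}^n$ with $0 \le \hat{x}_i \le B_i$ for each $i$, let $v \in \mathbb{R}$, and $\pi^+, \pi^- \in \mathbb{R}^n$. Define $S_1 = \{(x, \theta) \in \prod_i [0, B_i] \times \mathbb{R} : \theta \ge v + \sum_i \pi^+_i (x_i - \hat{x}_i)^+ + \sum_i \pi^-_i (\hat{x}_i - x_i)^+,\ \exists z \in \{0,1\}^n \text{ s.t. } (x_i - \hat{x}_i)^+ \le (B_i - \hat{x}_i) z_i \text{ and } (\hat{x}_i - x_i)^+ \le \hat{x}_i(1 - z_i)\ \forall i\}$, and let $S_2$ be the same set with $z \in [0,1]^n$ and auxiliary variables $\omega^+_i - \omega^-_i = x_i - \hat{x}_i$, $0 \le \omega^+_i \le (B_i - \hat{x}_i) z_i$, $0 \le \omega^-_i \le \hat{x}_i (1 - z_i)$, and cut $\theta \ge v + \sum_i \pi^+_i \omega^+_i + \sum_i \pi^-_i \omega^-_i$. Then the convex hull of $S_1$ equals $S_2$. -/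

import Mathlib

def reluS1 (n : ℕ) (B xh : Fin n → ℝ) (v : ℝ) (pip pim : Fin n → ℝ) :
    Set ((Fin n → ℝ) × ℝ) :=
  {q | (∀ i, q.1 i ∈ Set.Icc 0 (B i)) ∧
    (v + (∑ i, pip i * max (q.1 i - xh i) 0) + (∑ i, pim i * max (xh i - q.1 i) 0) ≤ q.2) ∧
    ∃ z : Fin n → ℝ, (∀ i, z i = 0 ∨ z i = 1) ∧
      ∀ i, max (q.1 i - xh i) 0 ≤ (B i - xh i) * z i ∧
        max (xh i - q.1 i) 0 ≤ xh i * (1 - z i)}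

lemma sum_update_mul {n : ℕ} (i : Fin n) (f g : Fin n → ℝ) (c : ℝ) :
    ∑ j, f j * Function.update g i c j = (∑ j, f j * g j) - f i * g i + f i * c := by
  have h1 : (fun j => f j * Function.update g i c j)
      = Function.update (fun j => f j * g j) i (f i * c) := by
    funext j
    rcases eq_or_ne j i with rfl | h
    · simp
    · simp [Function.update_of_ne h]
  rw [h1, Finset.sum_update_of_mem (Finset.mem_univ i)]
  have h2 : ∑ j ∈ Finset.univ.erase i, f j * g j + f i * g i = ∑ j, f j * g j :=
    Finset.sum_erase_add Finset.univ _ (Finset.mem_univ i)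
  rw [Finset.sdiff_singleton_eq_erase]
  linarith

lemma binary_mem (n : ℕ) (B xh : Fin n → ℝ)
    (v : ℝ) (pip pim : Fin n → ℝ) (x : Fin n → ℝ) (θ : ℝ) (ωp ωm z : Fin n → ℝ)
    (hbox : ∀ i, x i ∈ Set.Icc 0 (B i))
    (hz : ∀ i, z i = 0 ∨ z i = 1)
    (hw : ∀ i, ωp i - ωm i = x i - xh i ∧ 0 ≤ ωp i ∧ ωp i ≤ (B i - xh i) * z i ∧
      0 ≤ ωm i ∧ ωm i ≤ xh i * (1 - z i))
    (hcut : v + (∑ i, pip i * ωp i) + (∑ i, pim i * ωm i) ≤ θ) :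
    (x, θ) ∈ reluS1 n B xh v pip pim := by
  have key : ∀ i, ωp i = max (x i - xh i) 0 ∧ ωm i = max (xh i - x i) 0 := by
    intro i
    obtain ⟨h1, h2, h3, h4, h5⟩ := hw i
    rcases hz i with h | h
    · rw [h] at h3
      have hp : ωp i = 0 := le_antisymm (by linarith) h2
      have hm : ωm i = xh i - x i := by linarith
      constructor
      · rw [hp, eq_comm, max_eq_right]; linarith
      · rw [hm, eq_comm, max_eq_left]; linarith
    · rw [h] at h5
      have hm : ωm i = 0 := le_antisymm (by linarith) h4
      have hp : ωp i = x i - xh i := by linarith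
      constructor
      · rw [hp, eq_comm, max_eq_left]; linarith
      · rw [hm, eq_comm, max_eq_right]; linarith
  refine ⟨hbox, ?_, z, hz, ?_⟩
  · have e1 : ∑ i, pip i * max (x i - xh i) 0 = ∑ i, pip i * ωp i :=
      Finset.sum_congr rfl (fun i _ => by rw [(key i).1])
    have e2 : ∑ i, pim i * max (xh i - x i) 0 = ∑ i, pim i * ωm i :=
      Finset.sum_congr rfl (fun i _ => by rw [(key i).2])
    rw [e1, e2]; exact hcut
  · intro i
    obtain ⟨h1, h2, h3, h4, h5⟩ := hw i
    exact ⟨by rw [← (key i).1]; exact h3, by rw [← (key i).2]; exact h5⟩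

lemma relu_aux (n : ℕ) (B xh : Fin n → ℝ) (hxh : ∀ i, 0 ≤ xh i ∧ xh i ≤ B i)
    (v : ℝ) (pip pim : Fin n → ℝ) :
    ∀ (k : ℕ) (x : Fin n → ℝ) (θ : ℝ) (ωp ωm z : Fin n → ℝ),
      (Finset.univ.filter (fun i => z i ≠ 0 ∧ z i ≠ 1)).card ≤ k →
      (∀ i, x i ∈ Set.Icc 0 (B i)) →
      (∀ i, z i ∈ Set.Icc (0:ℝ) 1) →
      (∀ i, ωp i - ωm i = x i - xh i ∧ 0 ≤ ωp i ∧ ωp i ≤ (B i - xh i) * z i ∧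
        0 ≤ ωm i ∧ ωm i ≤ xh i * (1 - z i)) →
      v + (∑ i, pip i * ωp i) + (∑ i, pim i * ωm i) ≤ θ →
      (x, θ) ∈ convexHull ℝ (reluS1 n B xh v pip pim) := by
  intro k
  induction k with
  | zero =>
    intro x θ ωp ωm z hcard hbox hz hw hcut
    have hbin : ∀ i, z i = 0 ∨ z i = 1 := by
      intro i
      by_contra h
      push_neg at h
      have hmem : i ∈ Finset.univ.filter (fun j => z j ≠ 0 ∧ z j ≠ 1) := by
        simp [h.1, h.2]
      have := Finset.card_pos.mpr ⟨i, hmem⟩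
      omega
    exact subset_convexHull ℝ _ (binary_mem n B xh v pip pim x θ ωp ωm z hbox hbin hw hcut)
  | succ k ih =>
    intro x θ ωp ωm z hcard hbox hz hw hcut
    by_cases hbin : ∀ i, z i = 0 ∨ z i = 1
    · exact subset_convexHull ℝ _ (binary_mem n B xh v pip pim x θ ωp ωm z hbox hbin hw hcut)
    · push_neg at hbin
      obtain ⟨i, hi0, hi1⟩ := hbin
      obtain ⟨hz0, hz1⟩ := hz i
      have hzpos : 0 < z i := lt_of_le_of_ne hz0 (Ne.symm hi0)
      have h1z : 0 < 1 - z i := by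
        have : z i < 1 := lt_of_le_of_ne hz1 hi1
        linarith
      obtain ⟨hwi1, hwi2, hwi3, hwi4, hwi5⟩ := hw i
      set a : ℝ := xh i + ωp i / z i with ha
      set b : ℝ := xh i - ωm i / (1 - z i) with hb
      have hza : z i * (a - xh i) = ωp i := by
        rw [ha]; field_simp; ring
      have hzb : (1 - z i) * (xh i - b) = ωm i := by
        rw [hb]; field_simp; ring
      have haxh : xh i ≤ a := by
        rw [ha]
        have : 0 ≤ ωp i / z i := div_nonneg hwi2 hzpos.le
        linarith
      have haB : a ≤ B i := by
        rw [ha]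
        have : ωp i / z i ≤ B i - xh i := (div_le_iff₀ hzpos).mpr (by linarith)
        linarith
      have hbxh : b ≤ xh i := by
        rw [hb]
        have : 0 ≤ ωm i / (1 - z i) := div_nonneg hwi4 h1z.le
        linarith
      have hb0 : 0 ≤ b := by
        rw [hb]
        have : ωm i / (1 - z i) ≤ xh i := (div_le_iff₀ h1z).mpr (by linarith)
        linarith
      clear_value a b
      -- the two endpoint points
      set θ1 : ℝ := θ + pip i * (a - xh i - ωp i) - pim i * ωm i with hθ1
      set θ0 : ℝ := θ - pip i * ωp i + pim i * (xh i - b - ωm i) with hθ0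
      have hifil : i ∈ Finset.univ.filter (fun j => z j ≠ 0 ∧ z j ≠ 1) := by
        simp [hi0, hi1]
      have hsub : ∀ c : ℝ, c = 0 ∨ c = 1 →
          (Finset.univ.filter
            (fun j => Function.update z i c j ≠ 0 ∧ Function.update z i c j ≠ 1)).card ≤ k := by
        intro c hc
        have hss : (Finset.univ.filter
            (fun j => Function.update z i c j ≠ 0 ∧ Function.update z i c j ≠ 1)) ⊆
            (Finset.univ.filter (fun j => z j ≠ 0 ∧ z j ≠ 1)).erase i := by
          intro j hj
          simp only [Finset.mem_filter, Finset.mem_univ, true_and] at hj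
          have hji : j ≠ i := by
            rintro rfl
            rcases hc with rfl | rfl <;> simp at hj
          rw [Function.update_of_ne hji] at hj
          exact Finset.mem_erase.2 ⟨hji, by simp [hj.1, hj.2]⟩
        have h1 := Finset.card_le_card hss
        rw [Finset.card_erase_of_mem hifil] at h1
        omega
      have hp1 : (Function.update x i a, θ1) ∈ convexHull ℝ (reluS1 n B xh v pip pim) := by
        apply ih (Function.update x i a) θ1 (Function.update ωp i (a - xh i))
          (Function.update ωm i 0) (Function.update z i 1) (hsub 1 (Or.inr rfl))
        · intro j
          rcases eq_or_ne j i with rfl | h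
          · simp only [Function.update_self]
            exact ⟨le_trans (hxh j).1 haxh, haB⟩
          · rw [Function.update_of_ne h]; exact hbox j
        · intro j
          rcases eq_or_ne j i with rfl | h
          · simp only [Function.update_self]; exact ⟨zero_le_one, le_refl 1⟩
          · rw [Function.update_of_ne h]; exact hz j
        · intro j
          rcases eq_or_ne j i with rfl | h
          · simp only [Function.update_self]
            refine ⟨by ring, by linarith, by linarith, le_refl 0, by linarith⟩
          · simp only [Function.update_of_ne h]; exact hw j
        · rw [sum_update_mul i pip ωp (a - xh i), sum_update_mul i pim ωm 0, hθ1]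
          linarith
      have hp0 : (Function.update x i b, θ0) ∈ convexHull ℝ (reluS1 n B xh v pip pim) := by
        apply ih (Function.update x i b) θ0 (Function.update ωp i 0)
          (Function.update ωm i (xh i - b)) (Function.update z i 0) (hsub 0 (Or.inl rfl))
        · intro j
          rcases eq_or_ne j i with rfl | h
          · simp only [Function.update_self]
            exact ⟨hb0, le_trans hbxh (hxh j).2⟩
          · rw [Function.update_of_ne h]; exact hbox j
        · intro j
          rcases eq_or_ne j i with rfl | h
          · simp only [Function.update_self]; exact ⟨le_refl 0, zero_le_one⟩
          · rw [Function.update_of_ne h]; exact hz j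
        · intro j
          rcases eq_or_ne j i with rfl | h
          · simp only [Function.update_self]
            refine ⟨by ring, le_refl 0, by simp, by linarith, by linarith⟩
          · simp only [Function.update_of_ne h]; exact hw j
        · rw [sum_update_mul i pip ωp 0, sum_update_mul i pim ωm (xh i - b), hθ0]
          linarith
      have hconv : Convex ℝ (convexHull ℝ (reluS1 n B xh v pip pim)) := convex_convexHull ℝ _
      have hmem := hconv hp0 hp1 h1z.le hzpos.le (by ring)
      have hxeq : x = (1 - z i) • Function.update x i b + z i • Function.update x i a := by
        funext j
        simp only [Pi.add_apply, Pi.smul_apply, smul_eq_mul]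
        rcases eq_or_ne j i with rfl | h
        · simp only [Function.update_self]
          linear_combination -hza + hzb - hwi1
        · rw [Function.update_of_ne h, Function.update_of_ne h]; ring
      have hθeq : θ = (1 - z i) * θ0 + z i * θ1 := by
        rw [hθ0, hθ1]
        linear_combination (-(pip i)) * hza + (-(pim i)) * hzb
      have heq : (x, θ) = (1 - z i) • (Function.update x i b, θ0)
          + z i • (Function.update x i a, θ1) := by
        rw [Prod.smul_mk, Prod.smul_mk, Prod.mk_add_mk]
        exact Prod.ext hxeq (by rw [smul_eq_mul, smul_eq_mul]; exact hθeq)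
      rw [heq]
      exact hmem

/-- the convex hull of the mixed-integer linearization of a ReLU
Lagrangian cut equals its continuous relaxation. -/
theorem relu_cut_linearization_convex_hull (n : ℕ) (B xh : Fin n → ℝ)
    (hxh : ∀ i, 0 ≤ xh i ∧ xh i ≤ B i) (v : ℝ) (pip pim : Fin n → ℝ)
    (S₁ S₂ : Set ((Fin n → ℝ) × ℝ))
    (hS₁ : S₁ = {q | (∀ i, q.1 i ∈ Set.Icc 0 (B i)) ∧
      (v + (∑ i, pip i * max (q.1 i - xh i) 0) + (∑ i, pim i * max (xh i - q.1 i) 0) ≤ q.2) ∧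
      ∃ z : Fin n → ℝ, (∀ i, z i = 0 ∨ z i = 1) ∧
        ∀ i, max (q.1 i - xh i) 0 ≤ (B i - xh i) * z i ∧
          max (xh i - q.1 i) 0 ≤ xh i * (1 - z i)})
    (hS₂ : S₂ = {q | (∀ i, q.1 i ∈ Set.Icc 0 (B i)) ∧
      ∃ ωp ωm z : Fin n → ℝ, (∀ i, z i ∈ Set.Icc (0 : ℝ) 1) ∧
        (∀ i, ωp i - ωm i = q.1 i - xh i ∧ 0 ≤ ωp i ∧ ωp i ≤ (B i - xh i) * z i ∧
          0 ≤ ωm i ∧ ωm i ≤ xh i * (1 - z i)) ∧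
        v + (∑ i, pip i * ωp i) + (∑ i, pim i * ωm i) ≤ q.2}) :
    convexHull ℝ S₁ = S₂ := by
  subst hS₁ hS₂
  apply Set.Subset.antisymm
  · apply convexHull_min
    · -- S₁ ⊆ S₂
      rintro ⟨x, θ⟩ ⟨hbox, hcut, z, hz, hzc⟩
      refine ⟨hbox, fun i => max (x i - xh i) 0, fun i => max (xh i - x i) 0, z, ?_, ?_, hcut⟩
      · intro i
        rcases hz i with h | h <;> rw [h] <;> constructor <;> norm_num
      · intro i
        refine ⟨?_, le_max_right _ _, (hzc i).1, le_max_right _ _, (hzc i).2⟩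
        dsimp only
        rcases le_total (xh i) (x i) with h | h
        · rw [max_eq_left (by linarith), max_eq_right (by linarith)]; ring
        · rw [max_eq_right (by linarith), max_eq_left (by linarith)]; ring
    · -- S₂ convex
      rintro ⟨x, θ⟩ ⟨hbox, ωp, ωm, z, hz, hw, hcut⟩ ⟨y, τ⟩ ⟨hbox', ωp', ωm', z', hz', hw', hcut'⟩
        c d hc hd hcd
      refine ⟨?_, fun i => c * ωp i + d * ωp' i, fun i => c * ωm i + d * ωm' i,
        fun i => c * z i + d * z' i, ?_, ?_, ?_⟩
      · intro i
        have h1 := (hbox i).1; have h2 := (hbox i).2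
        have h3 := (hbox' i).1; have h4 := (hbox' i).2
        simp only [Prod.smul_mk, Prod.mk_add_mk, Pi.add_apply, Pi.smul_apply, smul_eq_mul]
        have hB : c * B i + d * B i = B i := by linear_combination (B i) * hcd
        constructor
        · nlinarith
        · nlinarith [mul_le_mul_of_nonneg_left h2 hc, mul_le_mul_of_nonneg_left h4 hd]
      · intro i
        obtain ⟨h1, h2⟩ := hz i; obtain ⟨h3, h4⟩ := hz' i
        dsimp only
        constructor
        · nlinarith
        · nlinarith [mul_le_mul_of_nonneg_left h2 hc, mul_le_mul_of_nonneg_left h4 hd]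
      · intro i
        obtain ⟨e1, p1, p2, m1, m2⟩ := hw i
        obtain ⟨e1', p1', p2', m1', m2'⟩ := hw' i
        simp only [Prod.smul_mk, Prod.mk_add_mk, Pi.add_apply, Pi.smul_apply, smul_eq_mul]
        refine ⟨?_, ?_, ?_, ?_, ?_⟩
        · linear_combination c * e1 + d * e1' - xh i * hcd
        · nlinarith
        · have hle := add_le_add (mul_le_mul_of_nonneg_left p2 hc)
            (mul_le_mul_of_nonneg_left p2' hd)
          have heq : c * ((B i - xh i) * z i) + d * ((B i - xh i) * z' i)
              = (B i - xh i) * (c * z i + d * z' i) := by ring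
          linarith
        · nlinarith
        · have hle := add_le_add (mul_le_mul_of_nonneg_left m2 hc)
            (mul_le_mul_of_nonneg_left m2' hd)
          have heq : c * (xh i * (1 - z i)) + d * (xh i * (1 - z' i))
              = xh i * (1 - (c * z i + d * z' i)) := by linear_combination (xh i) * hcd
          linarith
      · have e1 : ∑ i, pip i * (c * ωp i + d * ωp' i)
            = c * (∑ i, pip i * ωp i) + d * (∑ i, pip i * ωp' i) := by
          rw [Finset.mul_sum, Finset.mul_sum, ← Finset.sum_add_distrib]
          exact Finset.sum_congr rfl (fun i _ => by ring)
        have e2 : ∑ i, pim i * (c * ωm i + d * ωm' i)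
            = c * (∑ i, pim i * ωm i) + d * (∑ i, pim i * ωm' i) := by
          rw [Finset.mul_sum, Finset.mul_sum, ← Finset.sum_add_distrib]
          exact Finset.sum_congr rfl (fun i _ => by ring)
        simp only [Prod.smul_mk, Prod.mk_add_mk, smul_eq_mul]
        rw [e1, e2]
        have hv : c * v + d * v = v := by linear_combination v * hcd
        have h5 := mul_le_mul_of_nonneg_left hcut hc
        have h6 := mul_le_mul_of_nonneg_left hcut' hd
        nlinarith [h5, h6, hv]
  · -- S₂ ⊆ conv S₁
    rintro ⟨x, θ⟩ ⟨hbox, ωp, ωm, z, hz, hw, hcut⟩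
    exact relu_aux n B xh hxh v pip pim
      (Finset.univ.filter (fun i => z i ≠ 0 ∧ z i ≠ 1)).card x θ ωp ωm z le_rfl hbox hz hw hcut
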